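/- Let K be a field of characteristic zero, V a finite-dimensional K-vector space, m ≥ 1, and g(u) = g_m u^m + g_{m-1} u^{m-1} + ⋯ + g_0 ∈ End_K(V)[u] a polynomial with coefficients in End_K(V) whose leading coefficient g_m is invertible. Then for every h ∈ End_K(V)[u], the trace over K of the operator φ(h) : V[u]/gV[u] → V[u]/gV[u] equals −Tr_V(res_{u=∞}(g'(u)·g(u)^{-1}·h(u) du)); equivalently, Tr_K(φ(h)) equals the trace (as an element of End_K(V)) of the coefficient of u^{-1} in the formal Laurent expansion of g'(u)·g(u)^{-1}·h(u) in End_K(V)((u^{-1})). -/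

import Mathlib

open Polynomial

/-- The embedding of `R[u]` into the ring `R((u⁻¹))` of formal Laurent series in `u⁻¹`,
realized as Hahn series in the variable `T = u⁻¹`: the coefficient of `u^i` is placed
in degree `-i`.  The coefficient of `u⁻¹` of such a series `F` is `F.coeff 1`. -/
noncomputable def toLaurentAtInfinity {R : Type*} [Ring R] (p : Polynomial R) :
    LaurentSeries R :=
  p.sum fun i c => HahnSeries.single (-(i : ℤ)) c

/-- Multiplication of an element of `V[u]` (encoded as a finitely supported function
`ℕ →₀ V` of coefficients) by a polynomial `h ∈ End_K(V)[u]`. -/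
noncomputable def polyMulAct {K V : Type*} [Field K] [AddCommGroup V] [Module K V]
    (h : Polynomial (Module.End K V)) (P : ℕ →₀ V) : ℕ →₀ V :=
  h.sum fun i c => P.sum fun j v => Finsupp.single (i + j) (c v)

/-- The section `σ : V^m → V[u]` sending `(v_0, …, v_{m-1})` to `Σ v_i u^i`,
the unique representative of degree `< m` of a class in `V[u]/gV[u]`. -/
noncomputable def sigmaRep {V : Type*} [AddCommGroup V]
    (m : ℕ) (v : Fin m → V) : ℕ →₀ V :=
  ∑ i : Fin m, Finsupp.single (i : ℕ) (v i)

section Aux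

variable {K V : Type*} [Field K] [AddCommGroup V] [Module K V]

lemma polyMulAct_add (h : Polynomial (Module.End K V)) (P P' : ℕ →₀ V) :
    polyMulAct h (P + P') = polyMulAct h P + polyMulAct h P' := by
  unfold polyMulAct
  simp only [Polynomial.sum]
  rw [← Finset.sum_add_distrib]
  refine Finset.sum_congr rfl fun i _ => ?_
  exact Finsupp.sum_add_index' (by simp) (by simp [Finsupp.single_add])

lemma polyMulAct_zero (h : Polynomial (Module.End K V)) : polyMulAct h 0 = 0 := by
  simp [polyMulAct, Polynomial.sum]

lemma polyMulAct_sum {ι : Type*} (h : Polynomial (Module.End K V)) (s : Finset ι)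
    (f : ι → (ℕ →₀ V)) :
    polyMulAct h (∑ i ∈ s, f i) = ∑ i ∈ s, polyMulAct h (f i) :=
  map_sum (AddMonoidHom.mk' (polyMulAct h) (polyMulAct_add h)) f s

lemma polyMulAct_single (h : Polynomial (Module.End K V)) (j : ℕ) (w : V) :
    polyMulAct h (Finsupp.single j w) = h.sum fun i c => Finsupp.single (i + j) (c w) := by
  unfold polyMulAct
  simp only [Polynomial.sum]
  refine Finset.sum_congr rfl fun i _ => ?_
  exact Finsupp.sum_single_index (by simp)

lemma toLaurentAtInfinity_coeff {R : Type*} [Ring R] (p : Polynomial R) (t : ℤ) :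
    (toLaurentAtInfinity p).coeff t = if t ≤ 0 then p.coeff (-t).toNat else 0 := by
  unfold toLaurentAtInfinity
  rw [Polynomial.sum]
  have : (∑ n ∈ p.support, (HahnSeries.single (-(n:ℤ))) (p.coeff n)).coeff t
      = ∑ n ∈ p.support, ((HahnSeries.single (-(n:ℤ))) (p.coeff n)).coeff t :=
    map_sum (HahnSeries.coeff.addMonoidHom t) _ _
  rw [this]
  simp only [HahnSeries.coeff_single]
  split_ifs with ht
  · by_cases hmem : (-t).toNat ∈ p.support
    · exact (Finset.sum_eq_single_of_mem ((-t).toNat) hmem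
        (fun b _ hb => if_neg fun hc => hb (by omega))).trans (if_pos (by omega))
    · rw [Polynomial.notMem_support_iff.mp hmem]
      refine Finset.sum_eq_zero fun i hi => if_neg fun hc => hmem ?_
      have hit : i = (-t).toNat := by omega
      exact hit ▸ hi
  · refine Finset.sum_eq_zero fun i _ => if_neg ?_
    omega

lemma polyMulAct_single_apply (h : Polynomial (Module.End K V)) (j : ℕ) (w : V) (k : ℕ) :
    polyMulAct h (Finsupp.single j w) k = ((toLaurentAtInfinity h).coeff ((j:ℤ) - k)) w := by
  rw [polyMulAct_single, toLaurentAtInfinity_coeff]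
  simp only [Polynomial.sum, Finsupp.finset_sum_apply, Finsupp.single_apply]
  split_ifs with ht
  · have htn : (-(((j:ℤ)) - k)).toNat = k - j := by omega
    rw [htn]
    by_cases hmem : k - j ∈ h.support
    · exact (Finset.sum_eq_single_of_mem (k - j) hmem
        (fun b _ hb => if_neg fun hc => hb (by omega))).trans (if_pos (by omega))
    · rw [Polynomial.notMem_support_iff.mp hmem, LinearMap.zero_apply]
      refine Finset.sum_eq_zero fun i hi => if_neg fun hc => hmem ?_
      have hit : i = k - j := by omega
      exact hit ▸ hi
  · rw [LinearMap.zero_apply]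
    refine Finset.sum_eq_zero fun i _ => if_neg ?_
    omega

lemma sigmaRep_apply {m : ℕ} (v : Fin m → V) (k : ℕ) :
    sigmaRep m v k = if hk : k < m then v ⟨k, hk⟩ else 0 := by
  unfold sigmaRep
  rw [Finsupp.finset_sum_apply]
  simp only [Finsupp.single_apply]
  split_ifs with hk
  · rw [Finset.sum_eq_single (⟨k, hk⟩ : Fin m)]
    · simp
    · intro b _ hb
      refine if_neg fun hc => hb ?_
      exact Fin.ext hc
    · simp
  · refine Finset.sum_eq_zero fun i _ => if_neg ?_
    have := i.2
    omega

end Aux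
lemma toLaurentAtInfinity_eq_sum {R : Type*} [Ring R] (p : Polynomial R) (n : ℕ)
    (hn : p.natDegree < n) :
    toLaurentAtInfinity p = ∑ s ∈ Finset.range n, HahnSeries.single (-(s:ℤ)) (p.coeff s) := by
  unfold toLaurentAtInfinity
  exact p.sum_over_range' (fun i => by simp) n hn

lemma mul_coeff_expand {R : Type*} [Ring R] (p : Polynomial R) (n : ℕ)
    (hn : p.natDegree < n) (X : LaurentSeries R) (t : ℤ) :
    (toLaurentAtInfinity p * X).coeff t
      = ∑ s ∈ Finset.range n, p.coeff s * X.coeff (t + s) := by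
  rw [toLaurentAtInfinity_eq_sum p n hn, Finset.sum_mul]
  have : (∑ s ∈ Finset.range n, HahnSeries.single (-(s:ℤ)) (p.coeff s) * X).coeff t
      = ∑ s ∈ Finset.range n, (HahnSeries.single (-(s:ℤ)) (p.coeff s) * X).coeff t :=
    map_sum (HahnSeries.coeff.addMonoidHom t) _ _
  rw [this]
  refine Finset.sum_congr rfl fun s _ => ?_
  have := HahnSeries.coeff_single_mul_add (r := p.coeff s) (x := X) (a := t + s) (b := -(s:ℤ))
  rwa [show (t + (s:ℤ)) + -(s:ℤ) = t by ring] at this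
lemma polyMulAct_eq_sigmaRep_zero {K V : Type*} [Field K] [AddCommGroup V] [Module K V]
    {m : ℕ} {g : Polynomial (Module.End K V)}
    (hdeg : g.natDegree ≤ m) (hunit : IsUnit (g.coeff m))
    (P : ℕ →₀ V) (w : Fin m → V) (hPw : polyMulAct g P = sigmaRep m w) : P = 0 := by
  by_contra hP
  have hsupp : P.support.Nonempty := Finsupp.support_nonempty_iff.mpr hP
  set n := P.support.max' hsupp with hn
  have hnmem : n ∈ P.support := P.support.max'_mem hsupp
  have hval : polyMulAct g P (m + n) = 0 := by
    rw [hPw, sigmaRep_apply, dif_neg (by omega)]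
  have hexpand : polyMulAct g P (m + n)
      = ∑ i ∈ g.support, ∑ l ∈ P.support,
          (if i + l = m + n then (g.coeff i) (P l) else 0) := by
    unfold polyMulAct
    simp only [Polynomial.sum, Finsupp.sum, Finsupp.finset_sum_apply, Finsupp.single_apply]
  have hinner : ∀ i ∈ g.support,
      (∑ l ∈ P.support, if i + l = m + n then (g.coeff i) (P l) else 0)
        = if i = m then (g.coeff m) (P n) else 0 := by
    intro i hi
    have him : i ≤ m := le_trans (Polynomial.le_natDegree_of_mem_supp i hi) hdeg
    by_cases hcase : i = m
    · subst hcase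
      rw [if_pos rfl]
      exact (Finset.sum_eq_single_of_mem n hnmem
        (fun b hb hbn => if_neg fun hc => hbn (by omega))).trans (if_pos rfl)
    · rw [if_neg hcase]
      refine Finset.sum_eq_zero fun l hl => if_neg fun hc => hcase ?_
      have hln : l ≤ n := Finset.le_max' _ l hl
      omega
  have hgmPn : (g.coeff m) (P n) = 0 := by
    by_cases hms : m ∈ g.support
    · rw [hexpand, Finset.sum_congr rfl hinner,
        Finset.sum_ite_eq' g.support m (fun _ => (g.coeff m) (P n)), if_pos hms] at hval
      exact hval
    · rw [Polynomial.notMem_support_iff.mp hms, LinearMap.zero_apply]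
  have hPn : P n = 0 := by
    obtain ⟨u, hu⟩ := hunit
    have h1 : (1 : Module.End K V) (P n) = 0 := by
      rw [← u.inv_mul, Module.End.mul_apply, hu, hgmPn, map_zero]
    simpa using h1
  exact (Finsupp.mem_support_iff.mp hnmem) hPn

lemma comb {M : Type*} [AddCommMonoid M] (m : ℕ) (f : ℕ → M) (hf : ∀ s, m < s → f s = 0) :
    ∑ j ∈ Finset.range m, ∑ n ∈ Finset.Icc 1 m, f (j + n)
      = ∑ a ∈ Finset.range (m + 1), (a + 1) • f (a + 1) := by
  have step1 : ∀ j ∈ Finset.range m,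
      ∑ n ∈ Finset.Icc 1 m, f (j + n) = ∑ s ∈ Finset.Icc (j+1) m, f s := by
    intro j hj
    have h1 : ∑ n ∈ Finset.Icc 1 m, f (j + n) = ∑ s ∈ Finset.Icc (j+1) (j+m), f s := by
      rw [← Finset.map_add_left_Icc, Finset.sum_map]
      rfl
    rw [h1]
    refine (Finset.sum_subset (Finset.Icc_subset_Icc_right (by omega)) ?_).symm
    intro x hx hnx
    simp only [Finset.mem_Icc] at hx hnx
    exact hf x (by omega)
  rw [Finset.sum_congr rfl step1]
  rw [Finset.sum_comm' (s := Finset.range m) (t := fun j => Finset.Icc (j+1) m)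
    (t' := Finset.Icc 1 m) (s' := fun s => Finset.range s)
    (fun j s => by simp only [Finset.mem_range, Finset.mem_Icc]; omega)]
  have h2 : ∀ s ∈ Finset.Icc 1 m, ∑ _j ∈ Finset.range s, f s = s • f s := by
    intro s _; rw [Finset.sum_const, Finset.card_range]
  rw [Finset.sum_congr rfl h2]
  have h3 : ∑ a ∈ Finset.range (m + 1), (a + 1) • f (a + 1)
      = ∑ s ∈ Finset.Icc 1 (1 + m), s • f s := by
    rw [show Finset.range (m+1) = Finset.Icc 0 m from by ext x; simp [Nat.lt_succ_iff]]
    rw [← Finset.map_add_left_Icc 0 m 1, Finset.sum_map]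
    refine Finset.sum_congr rfl fun a _ => ?_
    simp [addLeftEmbedding_apply, add_comm]
  rw [h3, show 1 + m = m + 1 from by omega,
    Finset.sum_Icc_succ_top (by omega) (fun s => s • f s), hf (m+1) (by omega)]
  simp
lemma polyMulAct_sub {K V : Type*} [Field K] [AddCommGroup V] [Module K V]
    (h : Polynomial (Module.End K V)) (P P' : ℕ →₀ V) :
    polyMulAct h (P - P') = polyMulAct h P - polyMulAct h P' :=
  map_sub (AddMonoidHom.mk' (polyMulAct h) (polyMulAct_add h)) P P'

lemma sigmaRep_sub {V : Type*} [AddCommGroup V] (m : ℕ) (a b : Fin m → V) :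
    sigmaRep m (a - b) = sigmaRep m a - sigmaRep m b := by
  unfold sigmaRep
  rw [← Finset.sum_sub_distrib]
  refine Finset.sum_congr rfl fun i _ => ?_
  simp [Finsupp.single_sub]


/-- **Noncommutative Euler trace formula (proposition 5.1/6.1 of Bloch–Esnault).**
Let `V` be a finite-dimensional `K`-vector space, `g = g_m u^m + ⋯ + g_0 ∈ End_K(V)[u]`
with `g_m` invertible, and `h ∈ End_K(V)[u]`.  Identify `V[u]/gV[u]` with
`V ⊕ Vu ⊕ ⋯ ⊕ Vu^{m-1} ≅ (Fin m → V)` via degree `< m` representatives; `φ` is the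
operator `p ∘ (mult. by h) ∘ σ` on this space, characterized by
`h·σ(v) = g·Q + σ(φ v)` for some `Q ∈ V[u]`.  If `F` is a (two-sided) inverse of `g` in
`End_K(V)((u⁻¹))`, then `Tr_K(φ) = −Tr_V(res_{u=∞}(g' g⁻¹ h du))`, i.e. `Tr_K(φ)` equals
the `V`-trace of the coefficient of `u⁻¹` in `g'(u)·g(u)⁻¹·h(u)`. -/
theorem statement0 {K V : Type*} [Field K] [CharZero K] [AddCommGroup V] [Module K V]
    [FiniteDimensional K V] (m : ℕ) (hm : 1 ≤ m)
    (g : Polynomial (Module.End K V)) (hdeg : g.natDegree ≤ m)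
    (hunit : IsUnit (g.coeff m))
    (h : Polynomial (Module.End K V))
    (φ : (Fin m → V) →ₗ[K] (Fin m → V))
    (hφ : ∀ v : Fin m → V, ∃ Q : ℕ →₀ V,
      polyMulAct h (sigmaRep m v) = polyMulAct g Q + sigmaRep m (φ v))
    (F : LaurentSeries (Module.End K V))
    (hF1 : toLaurentAtInfinity g * F = 1) (hF2 : F * toLaurentAtInfinity g = 1) :
    LinearMap.trace K (Fin m → V) φ =
      LinearMap.trace K V
        ((toLaurentAtInfinity (derivative g) * F * toLaurentAtInfinity h).coeff 1) := by
  classical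
  set A : ℤ → Module.End K V := fun t => (F * toLaurentAtInfinity h).coeff t with hA
  -- key coefficient identity coming from g · (F · h) = h
  have key : ∀ t : ℤ, ∑ s ∈ Finset.range (m+1), g.coeff s * A (t + s)
      = (toLaurentAtInfinity h).coeff t := by
    intro t
    rw [← mul_coeff_expand g (m+1) (by omega) (F * toLaurentAtInfinity h) t,
      ← mul_assoc, hF1, one_mul]
  -- lower bound for the support of F · h
  obtain ⟨B, hB⟩ : ∃ B : ℤ, ∀ t : ℤ, t < B → A t = 0 := by
    by_cases hX : F * toLaurentAtInfinity h = 0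
    · exact ⟨0, fun t _ => by simp only [hA, hX, HahnSeries.coeff_zero]⟩
    · exact ⟨(F * toLaurentAtInfinity h).order, fun t ht =>
        HahnSeries.coeff_eq_zero_of_lt_order ht⟩
  set N : ℕ := m + B.natAbs + 1 with hN
  have hNbound : ∀ (k : ℕ), N ≤ k → ∀ j : Fin m, A ((j:ℤ) - k) = 0 := by
    intro k hk j
    refine hB _ ?_
    have hj : (j:ℕ) < m := j.2
    omega
  -- the explicit formula for φ
  set ψ : (Fin m → V) → (Fin m → V) := fun v i =>
    ∑ j : Fin m, ∑ n ∈ Finset.Icc 1 m,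
      (g.coeff ((i:ℕ) + n)) ((A ((n:ℤ) + (j:ℕ))) (v j)) with hψ
  have main : ∀ v : Fin m → V,
      polyMulAct h (sigmaRep m v)
        = polyMulAct g (∑ j : Fin m, ∑ k ∈ Finset.range N,
            Finsupp.single k ((A ((j:ℤ) - k)) (v j))) + sigmaRep m (ψ v) := by
    intro v
    ext k'
    rw [Finsupp.add_apply]
    rw [show sigmaRep m v = ∑ j : Fin m, Finsupp.single (j:ℕ) (v j) from rfl]
    rw [polyMulAct_sum, Finsupp.finset_sum_apply]
    rw [polyMulAct_sum, Finsupp.finset_sum_apply]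
    have hL : ∀ j : Fin m, polyMulAct h (Finsupp.single (j:ℕ) (v j)) k'
        = ((toLaurentAtInfinity h).coeff ((j:ℤ) - k')) (v j) :=
      fun j => polyMulAct_single_apply h j (v j) k'
    rw [Finset.sum_congr rfl fun j _ => hL j]
    have hR1 : ∀ j : Fin m,
        polyMulAct g (∑ k ∈ Finset.range N, Finsupp.single k ((A ((j:ℤ) - k)) (v j))) k'
          = ∑ k ∈ Finset.range N,
              ((toLaurentAtInfinity g).coeff ((k:ℤ) - k')) ((A ((j:ℤ) - k)) (v j)) := by
      intro j
      rw [polyMulAct_sum, Finsupp.finset_sum_apply]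
      exact Finset.sum_congr rfl fun k _ => polyMulAct_single_apply g k _ k'
    rw [Finset.sum_congr rfl fun j _ => hR1 j]
    have hR2 : sigmaRep m (ψ v) k'
        = ∑ j : Fin m, (if hk : k' < m then
            ∑ n ∈ Finset.Icc 1 m,
              (g.coeff (k' + n)) ((A ((n:ℤ) + (j:ℕ))) (v j)) else 0) := by
      rw [sigmaRep_apply]
      split_ifs with hk
      · simp only [hψ]
      · simp
    rw [hR2, ← Finset.sum_add_distrib]
    refine Finset.sum_congr rfl fun j _ => ?_
    -- per-j identity
    set w := v j with hw
    set u : ℕ → V := fun s => (g.coeff s) ((A ((j:ℤ) - (k':ℤ) + s)) w) with hu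
    have hzero : ∀ s, m < s → u s = 0 := by
      intro s hs
      rw [hu]
      simp only
      rw [Polynomial.coeff_eq_zero_of_natDegree_lt (by omega), LinearMap.zero_apply]
    -- claim 1 : the Q-part sums to ∑_{s ≤ k'} u s
    have claim1 : ∑ k ∈ Finset.range N,
        ((toLaurentAtInfinity g).coeff ((k:ℤ) - k')) ((A ((j:ℤ) - k)) w)
          = ∑ s ∈ Finset.range (k' + 1), u s := by
      set M := max N (k' + 1) with hM
      have e1 : ∑ k ∈ Finset.range N,
          ((toLaurentAtInfinity g).coeff ((k:ℤ) - k')) ((A ((j:ℤ) - k)) w)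
            = ∑ k ∈ Finset.range M,
          ((toLaurentAtInfinity g).coeff ((k:ℤ) - k')) ((A ((j:ℤ) - k)) w) := by
        refine Finset.sum_subset (Finset.range_subset_range.mpr (le_max_left _ _)) ?_
        intro k hkM hkN
        simp only [Finset.mem_range, not_lt] at hkN
        rw [hNbound k hkN j]
        simp
      have e2 : ∀ k ∈ Finset.range M,
          ((toLaurentAtInfinity g).coeff ((k:ℤ) - k')) ((A ((j:ℤ) - k)) w)
            = if k ≤ k' then u (k' - k) else 0 := by
        intro k _
        rw [toLaurentAtInfinity_coeff]
        by_cases hkk : k ≤ k'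
        · rw [if_pos (by omega : (k:ℤ) - (k':ℤ) ≤ 0), if_pos hkk]
          simp only [hu]
          have h3 : (-((k:ℤ) - (k':ℤ))).toNat = k' - k := by omega
          have h4 : ((j:ℕ):ℤ) - (k:ℤ) = ((j:ℕ):ℤ) - (k':ℤ) + ((k' - k : ℕ) : ℤ) := by
            push_cast; omega
          rw [h3, h4]
        · rw [if_neg (by omega : ¬((k:ℤ) - (k':ℤ) ≤ 0)), if_neg hkk, LinearMap.zero_apply]
      have e3 : ∑ k ∈ Finset.range M, (if k ≤ k' then u (k' - k) else 0)
          = ∑ k ∈ Finset.range (k' + 1), u (k' - k) := by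
        refine (Finset.sum_subset (Finset.range_subset_range.mpr (le_max_right _ _)) ?_).symm.trans ?_
        · intro k _ hk
          simp only [Finset.mem_range, not_lt] at hk
          rw [if_neg (by omega)]
        · refine Finset.sum_congr rfl fun k hk => ?_
          simp only [Finset.mem_range] at hk
          rw [if_pos (by omega)]
      have e4 : ∑ k ∈ Finset.range (k' + 1), u (k' - k) = ∑ s ∈ Finset.range (k' + 1), u s := by
        have := Finset.sum_range_reflect u (k' + 1)
        simpa using this
      rw [e1, Finset.sum_congr rfl e2, e3, e4]
    rw [claim1]
    -- claim 5 : ∑_{s ∈ range (m+1)} u s = LHS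
    have claim5 : ((toLaurentAtInfinity h).coeff ((j:ℤ) - k')) w
        = ∑ s ∈ Finset.range (m+1), u s := by
      have := congrArg (fun e : Module.End K V => e w) (key ((j:ℤ) - k'))
      simp only [LinearMap.coe_sum, Finset.sum_apply, Module.End.mul_apply] at this
      exact this.symm
    rw [claim5]
    split_ifs with hk
    · -- k' < m
      have claim2 : ∑ n ∈ Finset.Icc 1 m, (g.coeff (k' + n)) ((A ((n:ℤ) + (j:ℕ))) w)
          = ∑ s ∈ Finset.Icc (k' + 1) (k' + m), u s := by
        rw [← Finset.map_add_left_Icc 1 m k', Finset.sum_map]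
        refine Finset.sum_congr rfl fun n _ => ?_
        rw [hu]
        simp only [addLeftEmbedding_apply]
        congr 2
        push_cast
        ring
      rw [claim2]
      have claim3 : ∑ s ∈ Finset.range (k' + 1), u s
            + ∑ s ∈ Finset.Icc (k' + 1) (k' + m), u s
          = ∑ s ∈ Finset.range (k' + m + 1), u s := by
        simp only [Finset.range_eq_Ico]
        rw [show Finset.Icc (k' + 1) (k' + m) = Finset.Ico (k' + 1) (k' + m + 1) from by
          ext x; simp [Nat.lt_succ_iff]]
        exact Finset.sum_Ico_consecutive u (by omega) (by omega)
      have claim4 : ∑ s ∈ Finset.range (k' + m + 1), u s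
          = ∑ s ∈ Finset.range (m + 1), u s := by
        refine (Finset.sum_subset (Finset.range_subset_range.mpr (by omega)) ?_).symm
        intro s _ hs
        simp only [Finset.mem_range, not_lt] at hs
        exact hzero s (by omega)
      rw [claim3, claim4]
    · -- k' ≥ m
      rw [add_zero]
      refine Finset.sum_subset (Finset.range_subset_range.mpr (by omega)) ?_
      intro s _ hs
      simp only [Finset.mem_range, not_lt] at hs
      exact hzero s (by omega)
  -- φ agrees with ψ
  have hφψ : ∀ v, φ v = ψ v := by
    intro v
    obtain ⟨Q, hQ⟩ := hφ v
    set Q2 : ℕ →₀ V := ∑ j : Fin m, ∑ k ∈ Finset.range N,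
      Finsupp.single k ((A ((j:ℤ) - k)) (v j)) with hQ2
    have heq : polyMulAct g Q + sigmaRep m (φ v) = polyMulAct g Q2 + sigmaRep m (ψ v) :=
      hQ.symm.trans (main v)
    have h5 : polyMulAct g (Q - Q2) = sigmaRep m (ψ v - φ v) := by
      rw [polyMulAct_sub, sigmaRep_sub, sub_eq_sub_iff_add_eq_add]
      exact heq.trans (add_comm _ _)
    have hP0 : Q - Q2 = 0 := polyMulAct_eq_sigmaRep_zero hdeg hunit _ _ h5
    rw [hP0, polyMulAct_zero] at h5
    have h6 : ∀ i : Fin m, (ψ v - φ v) i = 0 := by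
      intro i
      have := congrFun (congrArg (fun x : ℕ →₀ V => (x : ℕ → V)) h5.symm) (i:ℕ)
      simp only [Finsupp.coe_zero, Pi.zero_apply] at this
      rw [sigmaRep_apply, dif_pos i.2] at this
      simpa using this
    have := sub_eq_zero.mp (funext h6 :  ψ v - φ v = 0)
    exact this.symm
  -- express φ as a sum of rank-type operators
  have hφ_eq : φ = ∑ j : Fin m, ∑ n ∈ Finset.Icc 1 m, ∑ i : Fin m,
      (LinearMap.single K (fun _ : Fin m => V) i) ∘ₗ
        ((g.coeff ((i:ℕ) + n)) * (A ((n:ℤ) + (j:ℕ)))) ∘ₗ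
          (LinearMap.proj (R := K) (φ := fun _ : Fin m => V) j) := by
    apply LinearMap.ext
    intro v
    rw [hφψ v]
    funext i
    rw [hψ]
    simp only [LinearMap.coe_sum, Finset.sum_apply, LinearMap.comp_apply,
      LinearMap.proj_apply, Module.End.mul_apply, LinearMap.single_apply]
    refine Finset.sum_congr rfl fun j _ => Finset.sum_congr rfl fun n _ => ?_
    symm
    simp [Pi.single_apply]
  -- compute the trace of φ
  set f : ℕ → K := fun s => LinearMap.trace K V (g.coeff s * A (s:ℤ)) with hf
  have hfzero : ∀ s, m < s → f s = 0 := by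
    intro s hs
    rw [hf]
    simp only
    rw [Polynomial.coeff_eq_zero_of_natDegree_lt (by omega), zero_mul, map_zero]
  have htrφ : LinearMap.trace K (Fin m → V) φ
      = ∑ j ∈ Finset.range m, ∑ n ∈ Finset.Icc 1 m, f (j + n) := by
    rw [hφ_eq, map_sum]
    rw [← Fin.sum_univ_eq_sum_range (fun j => ∑ n ∈ Finset.Icc 1 m, f (j + n)) m]
    refine Finset.sum_congr rfl fun j _ => ?_
    rw [map_sum]
    refine Finset.sum_congr rfl fun n hn => ?_
    rw [map_sum]
    have hterm : ∀ i : Fin m,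
        LinearMap.trace K (Fin m → V)
          ((LinearMap.single K (fun _ : Fin m => V) i) ∘ₗ
            ((g.coeff ((i:ℕ) + n)) * (A ((n:ℤ) + (j:ℕ)))) ∘ₗ
              (LinearMap.proj (R := K) (φ := fun _ : Fin m => V) j))
          = if i = j then LinearMap.trace K V (g.coeff ((i:ℕ) + n) * A ((n:ℤ) + (j:ℕ))) else 0 := by
      intro i
      rw [show (LinearMap.single K (fun _ : Fin m => V) i) ∘ₗ
            ((g.coeff ((i:ℕ) + n)) * (A ((n:ℤ) + (j:ℕ)))) ∘ₗ
              (LinearMap.proj (R := K) (φ := fun _ : Fin m => V) j)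
          = ((LinearMap.single K (fun _ : Fin m => V) i) ∘ₗ
            ((g.coeff ((i:ℕ) + n)) * (A ((n:ℤ) + (j:ℕ))))) ∘ₗ
              (LinearMap.proj (R := K) (φ := fun _ : Fin m => V) j) from rfl]
      rw [LinearMap.trace_comp_comm']
      rw [← LinearMap.comp_assoc]
      by_cases hij : j = i
      · subst hij
        rw [LinearMap.proj_comp_single_same, LinearMap.id_comp, if_pos rfl]
      · rw [LinearMap.proj_comp_single_ne K (fun _ : Fin m => V) j i hij,
          LinearMap.zero_comp, map_zero, if_neg (fun hc => hij hc.symm)]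
    rw [Finset.sum_congr rfl fun i _ => hterm i]
    rw [Finset.sum_ite_eq' Finset.univ j
      (fun i => LinearMap.trace K V (g.coeff ((i:ℕ) + n) * A ((n:ℤ) + (j:ℕ)))),
      if_pos (Finset.mem_univ j)]
    rw [hf]
    simp only
    congr 2
    push_cast
    ring
  rw [htrφ, comb m f hfzero]
  -- compute the right-hand side
  rw [mul_assoc, mul_coeff_expand (derivative g) (m+1)
    (by have := Polynomial.natDegree_derivative_le g; omega) (F * toLaurentAtInfinity h) 1]
  rw [map_sum]
  refine Finset.sum_congr rfl fun a _ => ?_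
  rw [Polynomial.coeff_derivative]
  have hsm : g.coeff (a + 1) * ((a:Module.End K V) + 1) * A (1 + (a:ℤ))
      = (a + 1) • (g.coeff (a + 1) * A (1 + (a:ℤ))) := by
    rw [show ((a:Module.End K V) + 1) = ((a + 1 : ℕ) : Module.End K V) from by push_cast; ring]
    rw [mul_assoc, ← nsmul_eq_mul, mul_smul_comm]
  rw [hsm, map_nsmul]
  rw [hf]
  simp only
  congr 3
  push_cast
  ring
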